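/- Let α > 1, B a finite index set, and t : B → ℝ_{≥0}, and set G = ∑_b t_b^α. Then the maximum over nonnegative v_b, u_b with u_b ≤ t_b for all b and ∑_b (v_b + u_b)^α ≤ G of ∑_b [ (v_b + t_b)^α − (v_b + u_b)^α − (t_b − u_b)^α ] equals (2^α − 2) · G, attained at v_b = t_b, u_b = 0. -/

import Mathlib

open Real Finset

/-- Convexity inequality for rpow on reals. -/
lemma aux_mul_rpow {p a b : ℝ} (ha : 0 ≤ a) (hb : 0 ≤ b) (hp : 1 ≤ p) :
    (a + b) ^ p ≤ 2 ^ (p - 1) * (a ^ p + b ^ p) := by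
  lift a to NNReal using ha
  lift b to NNReal using hb
  exact_mod_cast NNReal.rpow_add_le_mul_rpow_add_rpow a b hp

/-- Monotonicity of `s ↦ (x+s)^p - s^p` on nonnegatives. -/
lemma aux_mono {p x y t : ℝ} (hp : 1 ≤ p) (hx : 0 ≤ x) (hy : 0 ≤ y) (hyt : y ≤ t) :
    (x + y) ^ p - y ^ p ≤ (x + t) ^ p - t ^ p := by
  set F : ℝ → ℝ := fun s => (x + s) ^ p - s ^ p with hF
  have hd : ∀ s : ℝ, 0 ≤ s →
      HasDerivAt F (p * (x + s) ^ (p - 1) * 1 - p * s ^ (p - 1)) s := by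
    intro s hs
    have h1 : HasDerivAt (fun s : ℝ => (x + s) ^ p) (p * (x + s) ^ (p - 1) * 1) s := by
      have := (Real.hasDerivAt_rpow_const (x := x + s) (p := p) (Or.inr hp)).comp s
        ((hasDerivAt_id s).const_add x)
      simpa [Function.comp_def] using this
    have h2 : HasDerivAt (fun s : ℝ => s ^ p) (p * s ^ (p - 1)) s :=
      Real.hasDerivAt_rpow_const (Or.inr hp)
    exact h1.sub h2
  have hmono : MonotoneOn F (Set.Ici (0 : ℝ)) := by
    apply monotoneOn_of_deriv_nonneg (convex_Ici 0)
    · exact fun s hs => ((hd s hs).continuousAt).continuousWithinAt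
    · intro s hs
      rw [interior_Ici] at hs
      exact ((hd s (le_of_lt hs)).differentiableAt).differentiableWithinAt
    · intro s hs
      rw [interior_Ici] at hs
      rw [(hd s hs.le).deriv]
      have h3 : s ^ (p - 1) ≤ (x + s) ^ (p - 1) :=
        Real.rpow_le_rpow hs.le (by linarith) (by linarith)
      have hp0 : (0:ℝ) ≤ p := by linarith
      nlinarith
  exact hmono hy (le_trans hy hyt) hyt

theorem stmt_12 {ι : Type*} (B : Finset ι) (α : ℝ) (hα : 1 < α)
    (t : ι → ℝ) (ht : ∀ b ∈ B, 0 ≤ t b) (G : ℝ) (hG : G = ∑ b ∈ B, t b ^ α) :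
    IsGreatest {v : ℝ | ∃ u w : ι → ℝ,
        (∀ b ∈ B, 0 ≤ w b) ∧ (∀ b ∈ B, 0 ≤ u b ∧ u b ≤ t b) ∧
        (∑ b ∈ B, (w b + u b) ^ α ≤ G) ∧
        v = ∑ b ∈ B, ((w b + t b) ^ α - (w b + u b) ^ α - (t b - u b) ^ α)}
      ((2 ^ α - 2) * G) ∧
    (∑ b ∈ B, ((t b + t b) ^ α - (t b + 0) ^ α - (t b - 0) ^ α)
      = (2 ^ α - 2) * G) := by
  have hα1 : (1:ℝ) ≤ α := hα.le
  have hkey : ∑ b ∈ B, ((t b + t b) ^ α - (t b + 0) ^ α - (t b - 0) ^ α)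
      = (2 ^ α - 2) * G := by
    rw [hG, Finset.mul_sum]
    apply Finset.sum_congr rfl
    intro b hb
    have htb := ht b hb
    have h2 : t b + t b = 2 * t b := by ring
    rw [h2, Real.mul_rpow (by norm_num) htb, add_zero, sub_zero]
    ring
  constructor
  · constructor
    · refine ⟨fun _ => 0, t, fun b hb => ht b hb, fun b hb => ⟨le_refl 0, ht b hb⟩, ?_, ?_⟩
      · rw [hG]
        apply le_of_eq
        exact Finset.sum_congr rfl fun b hb => by rw [add_zero]
      · rw [← hkey]
    · rintro v ⟨u, w, hw, hu, hsum, rfl⟩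
      have hstep : ∀ b ∈ B, (w b + t b) ^ α - (w b + u b) ^ α - (t b - u b) ^ α
          ≤ (2 ^ (α - 1) - 1) * ((w b + u b) ^ α + t b ^ α) := by
        intro b hb
        obtain ⟨hu0, hut⟩ := hu b hb
        have hw0 := hw b hb
        have hx : (0:ℝ) ≤ w b + u b := by linarith
        have hy : (0:ℝ) ≤ t b - u b := by linarith
        have e1 : w b + t b = (w b + u b) + (t b - u b) := by ring
        have h1 : ((w b + u b) + (t b - u b)) ^ α - (t b - u b) ^ α
            ≤ ((w b + u b) + t b) ^ α - t b ^ α :=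
          aux_mono hα1 hx hy (by linarith)
        have h2 : ((w b + u b) + t b) ^ α ≤ 2 ^ (α - 1) * ((w b + u b) ^ α + t b ^ α) :=
          aux_mul_rpow hx (ht b hb) hα1
        rw [e1]
        nlinarith
      calc ∑ b ∈ B, ((w b + t b) ^ α - (w b + u b) ^ α - (t b - u b) ^ α)
          ≤ ∑ b ∈ B, (2 ^ (α - 1) - 1) * ((w b + u b) ^ α + t b ^ α) :=
            Finset.sum_le_sum hstep
        _ = (2 ^ (α - 1) - 1) * (∑ b ∈ B, (w b + u b) ^ α + ∑ b ∈ B, t b ^ α) := by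
            rw [← Finset.sum_add_distrib, ← Finset.mul_sum]
        _ ≤ (2 ^ (α - 1) - 1) * (G + G) := by
            apply mul_le_mul_of_nonneg_left
            · rw [← hG]; linarith
            · have h1 : (2:ℝ) ^ (0:ℝ) ≤ 2 ^ (α - 1) :=
                Real.rpow_le_rpow_of_exponent_le (by norm_num) (by linarith)
              rw [Real.rpow_zero] at h1
              linarith
        _ = (2 ^ α - 2) * G := by
            have h2 : (2:ℝ) ^ (α - 1) * 2 = 2 ^ α := by
              rw [Real.rpow_sub (by norm_num), Real.rpow_one]
              field_simp
            rw [← h2]; ring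
  · exact hkey
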